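/- Let G be a connected simple graph, let T be a spanning tree of G, and let u, v be distinct vertices of G. Then there exists an edge e of G such that u and v lie in different connected components of the graph obtained from G by deleting e if and only if some edge of the unique path in T from u to v is a bridge of G. -/

import Mathlib

open SimpleGraph

private lemma reach_mono' {V : Type*} {G H : SimpleGraph V}
    (h : ∀ x y, G.Adj x y → H.Reachable x y) {u v : V} (hr : G.Reachable u v) :
    H.Reachable u v := by
  obtain ⟨w⟩ := hr
  induction w with
  | nil => exact Reachable.refl _
  | cons hadj _ ih => exact (h _ _ hadj).trans ih

private lemma split_walk {V : Type*} {G : SimpleGraph V} {u v a b : V}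
    (w : G.Walk u v) (hnd : w.edges.Nodup) (h : s(a, b) ∈ w.edges) :
    ((G.deleteEdges {s(a,b)}).Reachable u a ∧ (G.deleteEdges {s(a,b)}).Reachable b v) ∨
    ((G.deleteEdges {s(a,b)}).Reachable u b ∧ (G.deleteEdges {s(a,b)}).Reachable a v) := by
  induction w with
  | nil => simp at h
  | @cons x y z hadj w' ih =>
    rw [SimpleGraph.Walk.edges_cons, List.nodup_cons] at hnd
    rw [SimpleGraph.Walk.edges_cons, List.mem_cons] at h
    rcases h with h | h
    · have hw' : ∀ e ∈ w'.edges, e ∉ ({s(a,b)} : Set (Sym2 V)) := by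
        intro e he hee
        simp only [Set.mem_singleton_iff] at hee
        exact hnd.1 (by rwa [hee, h] at he)
      have hr : (G.deleteEdges {s(a,b)}).Reachable y z := ⟨w'.toDeleteEdges _ hw'⟩
      rw [Sym2.eq_iff] at h
      rcases h with ⟨rfl, rfl⟩ | ⟨rfl, rfl⟩
      · exact Or.inl ⟨Reachable.refl _, hr⟩
      · exact Or.inr ⟨Reachable.refl _, hr⟩
    · have hne : s(x, y) ≠ s(a, b) := fun he => hnd.1 (he ▸ h)
      have hadj' : (G.deleteEdges {s(a,b)}).Adj x y :=
        SimpleGraph.deleteEdges_adj.mpr ⟨hadj, by simpa using hne⟩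
      rcases ih hnd.2 h with ⟨h1, h2⟩ | ⟨h1, h2⟩
      · exact Or.inl ⟨hadj'.reachable.trans h1, h2⟩
      · exact Or.inr ⟨hadj'.reachable.trans h1, h2⟩

/-- Let `G` be a connected simple graph, `T` a spanning tree of `G`,
and `u, v` distinct vertices of `G`.  Then there exists an edge `e` of `G` such that
`u` and `v` lie in different connected components of the graph obtained from `G` by
deleting `e` if and only if some edge of the unique path in `T` from `u` to `v` is a
bridge of `G`. -/
theorem stmt_10 {V : Type*} (G T : SimpleGraph V) (hG : G.Connected) (hT : T.IsTree)
    (hTG : T ≤ G) (u v : V) (huv : u ≠ v) :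
    (∃ e ∈ G.edgeSet, ¬ (G.deleteEdges {e}).Reachable u v) ↔
    (∃ e : Sym2 V, (∀ p : T.Path u v, e ∈ p.val.edges) ∧ G.IsBridge e) := by
  have hdel : ∀ e : Sym2 V, G.deleteEdges {e} = G \ SimpleGraph.fromEdgeSet {e} := fun _ => rfl
  constructor
  · rintro ⟨e, he, hnr⟩
    refine ⟨e, ?_, ?_⟩
    · intro p
      by_contra hep
      have hw' : ∀ e' ∈ p.val.edges, e' ∈ (G.deleteEdges {e}).edgeSet := by
        intro e' he'
        rw [SimpleGraph.edgeSet_deleteEdges]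
        exact ⟨(SimpleGraph.edgeSet_mono hTG) (p.val.edges_subset_edgeSet he'),
          fun h => hep ((Set.mem_singleton_iff.mp h) ▸ he')⟩
      exact hnr ⟨p.val.transfer _ hw'⟩
    · induction e using Sym2.inductionOn with
      | _ a b =>
        rw [SimpleGraph.isBridge_iff]
        refine fun hab => ?_
        refine hnr (reach_mono' (fun x y hxy => ?_) (hG.preconnected u v))
        by_cases hxy2 : s(x, y) = s(a, b)
        · rw [Sym2.eq_iff] at hxy2
          rcases hxy2 with ⟨rfl, rfl⟩ | ⟨rfl, rfl⟩
          · exact hab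
          · exact hab.symm
        · exact (SimpleGraph.deleteEdges_adj.mpr ⟨hxy, by simpa using hxy2⟩).reachable
  · classical
    rintro ⟨e, hpe, hbr⟩
    induction e using Sym2.inductionOn with
    | _ a b =>
    rw [SimpleGraph.isBridge_iff] at hbr
    have hnr := hbr
    obtain ⟨w⟩ := hT.isConnected u v
    let p : T.Path u v := w.toPath
    have hep : s(a, b) ∈ p.val.edges := hpe p
    have hw' : ∀ e' ∈ p.val.edges, e' ∈ G.edgeSet :=
      fun e' he' => (SimpleGraph.edgeSet_mono hTG) (p.val.edges_subset_edgeSet he')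
    have hndG : ((p.val.transfer G hw').edges).Nodup := by
      rw [SimpleGraph.Walk.edges_transfer]
      exact p.prop.edges_nodup
    have hepG : s(a, b) ∈ (p.val.transfer G hw').edges := by
      rw [SimpleGraph.Walk.edges_transfer]; exact hep
    refine ⟨s(a, b), hw' _ hep, fun hr => hnr ?_⟩
    rcases split_walk (p.val.transfer G hw') hndG hepG with ⟨h1, h2⟩ | ⟨h1, h2⟩
    · exact (h1.symm.trans hr).trans h2.symm
    · exact (h2.trans hr.symm).trans h1
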